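/- Let sp(j) be the number of partitions of j without repeated odd parts and with an even number of odd parts, minus the number of such partitions (without repeated odd parts) with an odd number of odd parts. Then ∑_{j≥0} sp(j) q^j = ∏_{j≥1} (1-q^{2j-1})/(1-q^{2j}) as formal power series. -/

import Mathlib

open scoped Classical

/-- `sp j`: the signed count of partitions of `j` without repeated odd parts,
each partition weighted by `(-1)^{number of odd parts}`.  Thus `sp j` is the number
of such partitions with an even number of odd parts minus the number with an odd
number of odd parts; `sp 0 = 1`. -/
noncomputable def signedNoRepeatedOddPartitions (j : ℕ) : ℤ :=
  ∑ᶠ P : {P : Nat.Partition j // ∀ i ∈ P.parts, Odd i → P.parts.count i ≤ 1},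
    (-1 : ℤ) ^ (Multiset.card ((P : Nat.Partition j).parts.filter (fun i => Odd i)))

namespace SP

open PowerSeries Finset

noncomputable section

/-- The weight function: the `i`-th factor of our generating product is `mk (w i)`. -/
def w (i k : ℕ) : ℚ :=
  if Odd i then (if k = 0 then 1 else if k = i then -1 else 0)
  else (if i ∣ k then 1 else 0)

theorem w_zero (i : ℕ) : w i 0 = 1 := by
  simp [w]

theorem w_not_dvd (i k : ℕ) (h : ¬ i ∣ k) : w i k = 0 := by
  rw [w]
  split_ifs with h1 h2 h3 <;> simp_all

theorem mk_w_odd {i : ℕ} (hi : Odd i) : PowerSeries.mk (w i) = 1 - (X : PowerSeries ℚ) ^ i := by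
  have hi0 : i ≠ 0 := by rintro rfl; exact (Nat.not_odd_iff_even.mpr Even.zero) hi
  ext k
  rw [coeff_mk, map_sub, coeff_one, coeff_X_pow, w, if_pos hi]
  split_ifs with h1 h2 <;> simp_all

theorem mk_w_even {i : ℕ} (hi0 : i ≠ 0) (hi : ¬ Odd i) :
    PowerSeries.mk (w i) = (1 - (X : PowerSeries ℚ) ^ i)⁻¹ := by
  obtain ⟨j, rfl⟩ : ∃ j, i = j + 1 := ⟨i - 1, (Nat.succ_pred_eq_of_pos (Nat.pos_of_ne_zero hi0)).symm⟩
  symm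
  rw [PowerSeries.inv_eq_iff_mul_eq_one]
  · ext n
    cases n with
    | zero => simp [mul_sub, zero_pow, w, hi]
    | succ n =>
      simp only [coeff_one, if_false, mul_sub, mul_one, LinearMap.map_sub, reduceCtorEq]
      simp_rw [coeff_mul, coeff_X_pow, coeff_mk, w, if_neg hi, @boole_mul ℚ _ _ _]
      erw [sum_ite, sum_ite]
      simp_rw [Finset.filter_filter, sum_const_zero, add_zero, sum_const, nsmul_eq_mul, mul_one,
        sub_eq_iff_eq_add, zero_add]
      symm
      split_ifs with h
      · suffices #{a ∈ antidiagonal (n + 1) | j + 1 ∣ a.fst ∧ a.snd = j + 1} = 1 by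
          convert congr_arg ((↑) : ℕ → ℚ) this
          exact Nat.cast_one.symm
        rw [card_eq_one]
        cases' h with p hp
        refine ⟨((j + 1) * (p - 1), j + 1), ?_⟩
        ext ⟨a₁, a₂⟩
        simp only [mem_filter, Prod.mk.injEq, Finset.HasAntidiagonal.mem_antidiagonal, mem_singleton]
        constructor
        · rintro ⟨a_left, ⟨a, rfl⟩, rfl⟩
          refine ⟨?_, rfl⟩
          rw [Nat.mul_sub_left_distrib, ← hp, ← a_left, mul_one, Nat.add_sub_cancel]
        · rintro ⟨rfl, rfl⟩
          match p with
          | 0 => rw [mul_zero] at hp; cases hp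
          | p + 1 => rw [hp]; simp [mul_add]
      · suffices #{a ∈ antidiagonal (n + 1) | j + 1 ∣ a.fst ∧ a.snd = j + 1} = 0 by
          convert congr_arg ((↑) : ℕ → ℚ) this
          exact Nat.cast_zero.symm
        rw [card_eq_zero]
        apply eq_empty_of_forall_notMem
        simp only [Prod.forall, mem_filter, not_and, Finset.HasAntidiagonal.mem_antidiagonal]
        rintro _ h₁ h₂ ⟨a, rfl⟩ rfl
        apply h
        simp [← h₂]
  · simp [zero_pow]

/-- The weighted analogue of the archive's `partialGF_prop`. -/
theorem weightedGF (n : ℕ) (s : Finset ℕ) (hs : ∀ i ∈ s, 0 < i) :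
    coeff (R := ℚ) n (∏ i ∈ s, PowerSeries.mk (w i)) =
      ∑ p ∈ Finset.univ.filter (fun p : n.Partition => ∀ j ∈ p.parts, j ∈ s),
        ∏ i ∈ s, w i (p.parts.count i * i) := by
  rw [coeff_prod]
  simp_rw [coeff_mk]
  rw [← Finset.sum_filter_of_ne
      (p := fun l : ℕ →₀ ℕ => ∀ i ∈ s, i ∣ l i)
      (fun l _ hl => fun i his => by
        by_contra hid
        exact hl (Finset.prod_eq_zero his (w_not_dvd i _ hid)))]
  symm
  set φ : (p : Nat.Partition n) →
      p ∈ Finset.univ.filter (fun p : n.Partition => ∀ j ∈ p.parts, j ∈ s) → (ℕ →₀ ℕ) :=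
    fun p _ => {
      toFun := fun i => p.parts.count i • i
      support := Finset.filter (fun i => i ≠ 0) p.parts.toFinset
      mem_support_toFun := fun a => by
        simp only [smul_eq_mul, ne_eq, mul_eq_zero, Multiset.count_eq_zero]
        rw [not_or, not_not]
        simp only [Multiset.mem_toFinset, not_not, mem_filter] }
  refine Finset.sum_bij φ ?_ ?_ ?_ ?_
  · intro p hp
    simp only [mem_filter, mem_univ, true_and] at hp
    simp only [φ, mem_filter]
    rw [Finset.mem_finsuppAntidiag]
    dsimp only [ne_eq, smul_eq_mul, Finsupp.coe_mk]
    refine ⟨⟨?_, fun i ↦ ?_⟩, fun i _ ↦ ⟨p.parts.count i, by simp [mul_comm]⟩⟩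
    · conv_rhs => simp [← p.parts_sum]
      rw [Finset.sum_multiset_count_of_subset _ s]
      · simp only [smul_eq_mul]
      · intro i
        simp only [Multiset.mem_toFinset, not_not, mem_filter]
        apply hp
    · simp only [ne_eq, Multiset.mem_toFinset, not_not, mem_filter, and_imp]
      exact fun hi _ ↦ hp i hi
  · intro p₁ hp₁ p₂ hp₂ h
    apply Nat.Partition.ext
    simp only [mem_filter, mem_univ, true_and] at hp₁ hp₂
    ext i
    simp only [φ, ne_eq, Multiset.mem_toFinset, not_not, smul_eq_mul, Finsupp.mk.injEq] at h
    by_cases hi : i = 0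
    · rw [hi]
      rw [Multiset.count_eq_zero_of_notMem]
      · rw [Multiset.count_eq_zero_of_notMem]
        intro a; exact Nat.lt_irrefl 0 (hs 0 (hp₂ 0 a))
      intro a; exact Nat.lt_irrefl 0 (hs 0 (hp₁ 0 a))
    · rw [← mul_left_inj' hi]
      rw [funext_iff] at h
      exact h.2 i
  · simp only [φ, mem_filter, Finset.mem_finsuppAntidiag, mem_univ, true_and, and_assoc]
    rintro f ⟨hf₁, hf₂, hf₄⟩
    refine ⟨⟨∑ i ∈ s, Multiset.replicate (f i / i) i, ?_, ?_⟩, ?_, ?_⟩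
    · intro i hi
      simp only [exists_prop, Multiset.mem_sum, mem_map, Function.Embedding.coeFn_mk] at hi
      rcases hi with ⟨t, ht, z⟩
      apply hs
      rwa [Multiset.eq_of_mem_replicate z]
    · simp_rw [Multiset.sum_sum, Multiset.sum_replicate, Nat.nsmul_eq_mul]
      rw [← hf₁]
      exact sum_congr rfl fun i hi => Nat.div_mul_cancel (hf₄ i hi)
    · intro i hi
      rw [Multiset.mem_sum] at hi
      rcases hi with ⟨j, hj₁, hj₂⟩
      rwa [Multiset.eq_of_mem_replicate hj₂]
    · ext i
      simp_rw [Multiset.count_sum', Multiset.count_replicate, sum_ite_eq']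
      simp only [ne_eq, Multiset.mem_toFinset, not_not, smul_eq_mul, ite_mul,
        zero_mul, Finsupp.coe_mk]
      split_ifs with h
      · exact Nat.div_mul_cancel (hf₄ i h)
      · apply symm
        rw [← Finsupp.notMem_support_iff]
        exact fun hmem => h (hf₂ hmem)
  · intro p hp
    rfl

/-- Computing the weight product of a single partition. -/
theorem weight_of_partition (n : ℕ) (s : Finset ℕ) (p : n.Partition)
    (hsub : ∀ j ∈ p.parts, j ∈ s) :
    ∏ i ∈ s, w i (p.parts.count i * i) =
      if (∀ i ∈ p.parts, Odd i → p.parts.count i ≤ 1) then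
        ((-1 : ℚ) ^ (Multiset.card (p.parts.filter (fun i => Odd i)))) else 0 := by
  split_ifs with hgood
  · have hfac : ∀ i ∈ s, w i (p.parts.count i * i)
        = (-1 : ℚ) ^ (Multiset.count i (p.parts.filter (fun j => Odd j))) := by
      intro i _
      rw [Multiset.count_filter]
      by_cases hodd : Odd i
      · have hi0 : i ≠ 0 := by rintro rfl; exact (Nat.not_odd_iff_even.mpr Even.zero) hodd
        rw [if_pos hodd, w, if_pos hodd]
        have hc : p.parts.count i = 0 ∨ p.parts.count i = 1 := by
          by_cases hmem : i ∈ p.parts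
          · have := hgood i hmem hodd
            omega
          · left; exact Multiset.count_eq_zero_of_notMem hmem
        rcases hc with hc | hc <;> rw [hc] <;> simp [hi0]
      · rw [if_neg hodd, w, if_neg hodd, if_pos (dvd_mul_left i _)]
        simp
    rw [Finset.prod_congr rfl hfac, Finset.prod_pow_eq_pow_sum]
    congr 1
    have hsub' : (p.parts.filter (fun j => Odd j)).toFinset ⊆ s := by
      intro i hi
      rw [Multiset.mem_toFinset, Multiset.mem_filter] at hi
      exact hsub i hi.1
    rw [← Multiset.toFinset_sum_count_eq (p.parts.filter (fun j => Odd j))]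
    exact (Finset.sum_subset hsub' (fun i _ hi => by
      rw [Multiset.count_eq_zero_of_notMem]
      rwa [← Multiset.mem_toFinset])).symm
  · push_neg at hgood
    obtain ⟨i, hmem, hodd, hcnt⟩ := hgood
    have hi0 : 0 < i := by
      rcases hodd with ⟨k, hk⟩; omega
    refine Finset.prod_eq_zero (hsub i hmem) ?_
    rw [w, if_pos hodd]
    have h1 : p.parts.count i * i ≠ 0 := by positivity
    have h2 : p.parts.count i * i ≠ i := by nlinarith
    rw [if_neg h1, if_neg h2]

theorem sp_eq (n : ℕ) :
    (signedNoRepeatedOddPartitions n : ℚ) =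
      ∑ p : n.Partition,
        (if (∀ i ∈ p.parts, Odd i → p.parts.count i ≤ 1) then
          ((-1 : ℚ) ^ (Multiset.card (p.parts.filter (fun i => Odd i)))) else 0) := by
  rw [signedNoRepeatedOddPartitions, finsum_eq_sum_of_fintype]
  push_cast
  rw [← Finset.sum_filter]
  exact (Finset.sum_subtype (Finset.univ.filter
      (fun p : n.Partition => ∀ i ∈ p.parts, Odd i → p.parts.count i ≤ 1))
      (fun p => by simp)
      (fun p => (-1 : ℚ) ^ (Multiset.card (p.parts.filter (fun i => Odd i))))).symm

/-- reindexing the product over `Icc 1 (2n+2)`. -/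
theorem prod_eq (n : ℕ) :
    (∏ j ∈ Finset.range (n + 1),
        ((1 - (PowerSeries.X : PowerSeries ℚ) ^ (2 * j + 1)) *
          (1 - (PowerSeries.X : PowerSeries ℚ) ^ (2 * j + 2))⁻¹)) =
      ∏ i ∈ Finset.Icc 1 (2 * n + 2), PowerSeries.mk (w i) := by
  have hunion : Finset.Icc 1 (2 * n + 2) =
      Finset.disjUnion
        ((Finset.range (n + 1)).map ⟨fun j => 2 * j + 1, @id (Function.Injective fun j : ℕ => 2 * j + 1) (by intro a b h; dsimp at h; omega)⟩)
        ((Finset.range (n + 1)).map ⟨fun j => 2 * j + 2, @id (Function.Injective fun j : ℕ => 2 * j + 2) (by intro a b h; dsimp at h; omega)⟩)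
        (by
          simp only [Finset.disjoint_left, Finset.mem_map, Finset.mem_range,
            Function.Embedding.coeFn_mk]
          rintro a ⟨x, _, rfl⟩ ⟨y, _, h⟩
          omega) := by
    ext i
    simp only [Finset.mem_Icc, Finset.disjUnion_eq_union, Finset.mem_union, Finset.mem_map,
      Finset.mem_range, Function.Embedding.coeFn_mk]
    constructor
    · rintro ⟨h1, h2⟩
      rcases Nat.even_or_odd i with ⟨k, hk⟩ | ⟨k, hk⟩
      · right; exact ⟨k - 1, by omega, by omega⟩
      · left; exact ⟨k, by omega, by omega⟩
    · rintro (⟨x, hx, rfl⟩ | ⟨x, hx, rfl⟩) <;> omega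
  rw [hunion, Finset.prod_disjUnion, Finset.prod_map, Finset.prod_map]
  simp only [Function.Embedding.coeFn_mk]
  rw [← Finset.prod_mul_distrib]
  refine Finset.prod_congr rfl fun j _ => ?_
  rw [mk_w_odd ⟨j, by ring⟩, mk_w_even (by omega) (by rw [Nat.odd_iff]; omega)]

end

end SP

/-- `∑_{j≥0} sp(j) q^j = ∏_{j≥1} (1-q^{2j-1})/(1-q^{2j})` as formal
power series; stated coefficientwise, representing the infinite product by the
finite product over `1 ≤ j ≤ n+1` (later factors do not affect `q^n`). -/
theorem stmt2 (n : ℕ) :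
    PowerSeries.coeff (R := ℚ) n
        (PowerSeries.mk fun j => (signedNoRepeatedOddPartitions j : ℚ))
      = PowerSeries.coeff (R := ℚ) n
          (∏ j ∈ Finset.range (n + 1),
            ((1 - (PowerSeries.X : PowerSeries ℚ) ^ (2 * j + 1)) *
              (1 - (PowerSeries.X : PowerSeries ℚ) ^ (2 * j + 2))⁻¹)) := by
  rw [SP.prod_eq, SP.weightedGF n _ (fun i hi => by
    rw [Finset.mem_Icc] at hi; omega)]
  have hall : ∀ p : n.Partition, ∀ j ∈ p.parts, j ∈ Finset.Icc 1 (2 * n + 2) := by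
    intro p j hj
    rw [Finset.mem_Icc]
    have h1 := p.parts_pos hj
    have h2 : j ≤ n := by
      conv_rhs => rw [← p.parts_sum]
      exact Multiset.le_sum_of_mem hj
    omega
  rw [Finset.filter_true_of_mem (fun p _ => hall p)]
  rw [PowerSeries.coeff_mk, SP.sp_eq]
  exact Finset.sum_congr rfl fun p _ =>
    (SP.weight_of_partition n _ p (hall p)).symm
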